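/- arXiv:2404.07373 — 2 statements merged into one kernel-verified Lean document; each statement's English description precedes it below -/
import Mathlib

section
/- Suppose the matrices A, B_w, B_d, C_v, D_vw, D_vd, C_e, D_ew, D_ed, a symmetric positive semidefinite P, a scalar λ ≥ 0, and a symmetric M satisfy the dissipativity LMI condition with the supply-rate matrix X = [[γ² I, 0], [0, −I]] for some γ ≥ 0. Then for every admissible trajectory (x, w, d, v, e) of the linear system whose uncertainty signals satisfy the static integral quadratic constraint defined by M, and with zero initial state x(0) = 0, the closed-loop L₂ gain bound holds: for every T ≥ 0, ∫₀ᵀ ‖e(t)‖² dt ≤ γ² ∫₀ᵀ ‖d(t)‖² dt. -/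
open Matrix

/-- Negative semidefiniteness of a real matrix: `zᵀ N z ≤ 0` for all `z`. -/
def IsNegSemidef {m : Type*} [Fintype m] (N : Matrix m m ℝ) : Prop :=
  ∀ z : m → ℝ, z ⬝ᵥ N *ᵥ z ≤ 0

/-- The dissipativity LMI condition
`[[AᵀP + PA, P Bw, P Bd], [Bwᵀ P, 0, 0], [Bdᵀ P, 0, 0]] + λ Hᵀ M H − Gᵀ X G ⪯ 0` with
`H = [[Cv, Dvw, Dvd], [0, I, 0]]` and `G = [[0, 0, I], [Ce, Dew, Ded]]`. -/
def DissLMI {ιn ιw ιd ιv ιe : Type*} [Fintype ιn] [Fintype ιw] [Fintype ιd]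
    [Fintype ιv] [Fintype ιe] [DecidableEq ιw] [DecidableEq ιd]
    (A : Matrix ιn ιn ℝ) (Bw : Matrix ιn ιw ℝ) (Bd : Matrix ιn ιd ℝ)
    (Cv : Matrix ιv ιn ℝ) (Dvw : Matrix ιv ιw ℝ) (Dvd : Matrix ιv ιd ℝ)
    (Ce : Matrix ιe ιn ℝ) (Dew : Matrix ιe ιw ℝ) (Ded : Matrix ιe ιd ℝ)
    (P : Matrix ιn ιn ℝ) (lam : ℝ)
    (M : Matrix (ιv ⊕ ιw) (ιv ⊕ ιw) ℝ)
    (X : Matrix (ιd ⊕ ιe) (ιd ⊕ ιe) ℝ) : Prop :=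
  let H : Matrix (ιv ⊕ ιw) (ιn ⊕ (ιw ⊕ ιd)) ℝ :=
    fromBlocks Cv (fromCols Dvw Dvd) 0 (fromCols 1 0)
  let G : Matrix (ιd ⊕ ιe) (ιn ⊕ (ιw ⊕ ιd)) ℝ :=
    fromBlocks 0 (fromCols 0 1) Ce (fromCols Dew Ded)
  let F0 : Matrix (ιn ⊕ (ιw ⊕ ιd)) (ιn ⊕ (ιw ⊕ ιd)) ℝ :=
    fromBlocks (Aᵀ * P + P * A) (fromCols (P * Bw) (P * Bd))
      (fromRows (Bwᵀ * P) (Bdᵀ * P)) 0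
  IsNegSemidef (F0 + lam • (Hᵀ * M * H) - Gᵀ * X * G)

lemma quad_transpose {k m : Type*} [Fintype k] [Fintype m]
    (H : Matrix k m ℝ) (M : Matrix k k ℝ) (z : m → ℝ) :
    z ⬝ᵥ (Hᵀ * M * H) *ᵥ z = (H *ᵥ z) ⬝ᵥ M *ᵥ (H *ᵥ z) := by
  rw [Matrix.mul_assoc, ← mulVec_mulVec, dotProduct_mulVec, vecMul_transpose,
    ← mulVec_mulVec]

lemma pointwise_identity {n nw nd nv ne : ℕ}
    (A : Matrix (Fin n) (Fin n) ℝ) (Bw : Matrix (Fin n) (Fin nw) ℝ)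
    (Bd : Matrix (Fin n) (Fin nd) ℝ)
    (Cv : Matrix (Fin nv) (Fin n) ℝ) (Dvw : Matrix (Fin nv) (Fin nw) ℝ)
    (Dvd : Matrix (Fin nv) (Fin nd) ℝ)
    (Ce : Matrix (Fin ne) (Fin n) ℝ) (Dew : Matrix (Fin ne) (Fin nw) ℝ)
    (Ded : Matrix (Fin ne) (Fin nd) ℝ)
    (P : Matrix (Fin n) (Fin n) ℝ) (lam : ℝ) (γ : ℝ)
    (M : Matrix (Fin nv ⊕ Fin nw) (Fin nv ⊕ Fin nw) ℝ)
    (a : Fin n → ℝ) (b : Fin nw → ℝ) (c : Fin nd → ℝ) :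
    (Sum.elim a (Sum.elim b c)) ⬝ᵥ
      ((fromBlocks (Aᵀ * P + P * A) (fromCols (P * Bw) (P * Bd))
          (fromRows (Bwᵀ * P) (Bdᵀ * P)) 0
        + lam • ((fromBlocks Cv (fromCols Dvw Dvd) 0 (fromCols 1 0) : Matrix (Fin nv ⊕ Fin nw) (Fin n ⊕ (Fin nw ⊕ Fin nd)) ℝ)ᵀ * M *
            (fromBlocks Cv (fromCols Dvw Dvd) 0 (fromCols 1 0) : Matrix (Fin nv ⊕ Fin nw) (Fin n ⊕ (Fin nw ⊕ Fin nd)) ℝ))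
        - (fromBlocks 0 (fromCols 0 1) Ce (fromCols Dew Ded) : Matrix (Fin nd ⊕ Fin ne) (Fin n ⊕ (Fin nw ⊕ Fin nd)) ℝ)ᵀ *
            (fromBlocks ((γ ^ 2) • (1 : Matrix (Fin nd) (Fin nd) ℝ)) 0 0
              (-(1 : Matrix (Fin ne) (Fin ne) ℝ))) *
            (fromBlocks 0 (fromCols 0 1) Ce (fromCols Dew Ded) : Matrix (Fin nd ⊕ Fin ne) (Fin n ⊕ (Fin nw ⊕ Fin nd)) ℝ)) *ᵥ
        (Sum.elim a (Sum.elim b c)))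
    = ((A *ᵥ a + Bw *ᵥ b + Bd *ᵥ c) ⬝ᵥ P *ᵥ a + a ⬝ᵥ P *ᵥ (A *ᵥ a + Bw *ᵥ b + Bd *ᵥ c))
      + lam * (Sum.elim (Cv *ᵥ a + Dvw *ᵥ b + Dvd *ᵥ c) b ⬝ᵥ
          M *ᵥ Sum.elim (Cv *ᵥ a + Dvw *ᵥ b + Dvd *ᵥ c) b)
      + (Ce *ᵥ a + Dew *ᵥ b + Ded *ᵥ c) ⬝ᵥ (Ce *ᵥ a + Dew *ᵥ b + Ded *ᵥ c)
      - γ ^ 2 * (c ⬝ᵥ c) := by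
  set z : (Fin n ⊕ (Fin nw ⊕ Fin nd)) → ℝ := Sum.elim a (Sum.elim b c) with hz
  have hzl : z ∘ Sum.inl = a := rfl
  have hzr : z ∘ Sum.inr = Sum.elim b c := rfl
  simp only [sub_mulVec, add_mulVec, smul_mulVec, dotProduct_sub, dotProduct_add,
    dotProduct_smul, smul_eq_mul, quad_transpose]
  have hH : (fromBlocks Cv (fromCols Dvw Dvd) 0 (fromCols 1 0)) *ᵥ z
      = Sum.elim (Cv *ᵥ a + Dvw *ᵥ b + Dvd *ᵥ c) b := by
    rw [fromBlocks_mulVec, hzl, hzr]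
    simp [add_assoc]
  have hG : (fromBlocks 0 (fromCols 0 1) Ce (fromCols Dew Ded)) *ᵥ z
      = Sum.elim c (Ce *ᵥ a + Dew *ᵥ b + Ded *ᵥ c) := by
    rw [fromBlocks_mulVec, hzl, hzr]
    simp [add_assoc]
  rw [hH, hG]
  have hX : Sum.elim c (Ce *ᵥ a + Dew *ᵥ b + Ded *ᵥ c) ⬝ᵥ
      (fromBlocks ((γ ^ 2) • (1 : Matrix (Fin nd) (Fin nd) ℝ)) 0 0
        (-(1 : Matrix (Fin ne) (Fin ne) ℝ))) *ᵥ
      Sum.elim c (Ce *ᵥ a + Dew *ᵥ b + Ded *ᵥ c)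
      = γ ^ 2 * (c ⬝ᵥ c) -
        (Ce *ᵥ a + Dew *ᵥ b + Ded *ᵥ c) ⬝ᵥ (Ce *ᵥ a + Dew *ᵥ b + Ded *ᵥ c) := by
    rw [fromBlocks_mulVec]
    simp [sumElim_dotProduct_sumElim, smul_mulVec, neg_mulVec, dotProduct_smul,
      sub_eq_add_neg]
  rw [hX]
  have hF0 : z ⬝ᵥ (fromBlocks (Aᵀ * P + P * A) (fromCols (P * Bw) (P * Bd))
      (fromRows (Bwᵀ * P) (Bdᵀ * P)) 0) *ᵥ z
      = (A *ᵥ a + Bw *ᵥ b + Bd *ᵥ c) ⬝ᵥ P *ᵥ a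
        + a ⬝ᵥ P *ᵥ (A *ᵥ a + Bw *ᵥ b + Bd *ᵥ c) := by
    rw [fromBlocks_mulVec, hzl, hzr, hz, sumElim_dotProduct_sumElim]
    rw [fromCols_mulVec_sumElim, fromRows_mulVec, zero_mulVec, add_zero,
      sumElim_dotProduct_sumElim]
    have e1 : ∀ (k : ℕ) (Q : Matrix (Fin n) (Fin k) ℝ) (u : Fin k → ℝ),
        u ⬝ᵥ (Qᵀ * P) *ᵥ a = (Q *ᵥ u) ⬝ᵥ P *ᵥ a := by
      intro k Q u
      rw [← mulVec_mulVec, dotProduct_mulVec, vecMul_transpose]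
    have e2 : ∀ (k : ℕ) (Q : Matrix (Fin n) (Fin k) ℝ) (u : Fin k → ℝ),
        a ⬝ᵥ (P * Q) *ᵥ u = a ⬝ᵥ P *ᵥ (Q *ᵥ u) := by
      intro k Q u
      rw [← mulVec_mulVec]
    simp only [dotProduct_add, add_dotProduct, mulVec_add, add_mulVec]
    rw [e1 n A a, e2 n A a, e2 nw Bw b, e2 nd Bd c, e1 nw Bw b, e1 nd Bd c]
    ring
  rw [hF0]
  simp only [dotProduct_add, mulVec_add]
  ring

lemma contOn_dot {ι : Type*} [Fintype ι] {s : Set ℝ} {f g : ℝ → ι → ℝ}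
    (hf : ContinuousOn f s) (hg : ContinuousOn g s) :
    ContinuousOn (fun t => f t ⬝ᵥ g t) s := by
  simp only [dotProduct]
  refine continuousOn_finset_sum _ fun i _ => ?_
  exact ((continuous_apply i).comp_continuousOn hf).mul
    ((continuous_apply i).comp_continuousOn hg)

lemma contOn_mulVec {ι κ : Type*} [Fintype ι] [Fintype κ] {s : Set ℝ}
    (Q : Matrix ι κ ℝ) {f : ℝ → κ → ℝ} (hf : ContinuousOn f s) :
    ContinuousOn (fun t => Q *ᵥ f t) s := by
  rw [continuousOn_pi]
  intro i
  simp only [mulVec, dotProduct]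
  refine continuousOn_finset_sum _ fun j _ => ?_
  exact continuousOn_const.mul ((continuous_apply j).comp_continuousOn hf)

lemma contOn_elim {ι κ : Type*} {s : Set ℝ} {f : ℝ → ι → ℝ} {g : ℝ → κ → ℝ}
    (hf : ContinuousOn f s) (hg : ContinuousOn g s) :
    ContinuousOn (fun t => Sum.elim (f t) (g t)) s := by
  rw [continuousOn_pi]
  rintro (i | i)
  · exact (continuous_apply i).comp_continuousOn hf
  · exact (continuous_apply i).comp_continuousOn hg

/-- the dissipativity LMI with supply-rate matrix
`X = [[γ² I, 0], [0, −I]]` implies a closed-loop `L₂` gain bound of `γ`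
from zero initial state, along trajectories satisfying the static IQC. -/
theorem statement2 {n nw nd nv ne : ℕ}
    (A : Matrix (Fin n) (Fin n) ℝ) (Bw : Matrix (Fin n) (Fin nw) ℝ)
    (Bd : Matrix (Fin n) (Fin nd) ℝ)
    (Cv : Matrix (Fin nv) (Fin n) ℝ) (Dvw : Matrix (Fin nv) (Fin nw) ℝ)
    (Dvd : Matrix (Fin nv) (Fin nd) ℝ)
    (Ce : Matrix (Fin ne) (Fin n) ℝ) (Dew : Matrix (Fin ne) (Fin nw) ℝ)
    (Ded : Matrix (Fin ne) (Fin nd) ℝ)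
    (P : Matrix (Fin n) (Fin n) ℝ) (lam : ℝ) (γ : ℝ)
    (M : Matrix (Fin nv ⊕ Fin nw) (Fin nv ⊕ Fin nw) ℝ)
    (hP : P.PosSemidef) (hlam : 0 ≤ lam) (hγ : 0 ≤ γ) (hM : M.IsSymm)
    (hLMI : DissLMI A Bw Bd Cv Dvw Dvd Ce Dew Ded P lam M
      (fromBlocks ((γ ^ 2) • (1 : Matrix (Fin nd) (Fin nd) ℝ)) 0 0
        (-(1 : Matrix (Fin ne) (Fin ne) ℝ))))
    (x : ℝ → Fin n → ℝ) (w : ℝ → Fin nw → ℝ) (d : ℝ → Fin nd → ℝ)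
    (v : ℝ → Fin nv → ℝ) (e : ℝ → Fin ne → ℝ)
    (hw : ContinuousOn w (Set.Ici 0)) (hd : ContinuousOn d (Set.Ici 0))
    (hx : ∀ t ∈ Set.Ici (0:ℝ),
      HasDerivWithinAt x (A *ᵥ x t + Bw *ᵥ w t + Bd *ᵥ d t) (Set.Ici 0) t)
    (hv : ∀ t, v t = Cv *ᵥ x t + Dvw *ᵥ w t + Dvd *ᵥ d t)
    (he : ∀ t, e t = Ce *ᵥ x t + Dew *ᵥ w t + Ded *ᵥ d t)
    (hIQC : ∀ T, 0 ≤ T → 0 ≤ ∫ t in (0:ℝ)..T,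
      Sum.elim (v t) (w t) ⬝ᵥ M *ᵥ Sum.elim (v t) (w t))
    (hx0 : x 0 = 0) :
    ∀ T, 0 ≤ T →
      (∫ t in (0:ℝ)..T, e t ⬝ᵥ e t) ≤ γ ^ 2 * ∫ t in (0:ℝ)..T, d t ⬝ᵥ d t := by
  intro T hT
  set x' : ℝ → Fin n → ℝ := fun t => A *ᵥ x t + Bw *ᵥ w t + Bd *ᵥ d t with hx'def
  set V : ℝ → ℝ := fun t => x t ⬝ᵥ P *ᵥ x t with hVdef
  set V' : ℝ → ℝ := fun t => x' t ⬝ᵥ P *ᵥ x t + x t ⬝ᵥ P *ᵥ x' t with hV'def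
  set q : ℝ → ℝ := fun t => Sum.elim (v t) (w t) ⬝ᵥ M *ᵥ Sum.elim (v t) (w t) with hqdef
  -- pointwise dissipation inequality
  have hpt : ∀ t, V' t + lam * q t + e t ⬝ᵥ e t - γ ^ 2 * (d t ⬝ᵥ d t) ≤ 0 := by
    intro t
    simp only [DissLMI] at hLMI
    have h := hLMI (Sum.elim (x t) (Sum.elim (w t) (d t)))
    rw [pointwise_identity] at h
    simp only [hV'def, hqdef, hx'def, hv, he]
    exact h
  -- continuity facts
  have hxc : ContinuousOn x (Set.Ici 0) := fun t ht => (hx t ht).continuousWithinAt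
  have hx'c : ContinuousOn x' (Set.Ici 0) :=
    ((contOn_mulVec A hxc).add (contOn_mulVec Bw hw)).add (contOn_mulVec Bd hd)
  have hvc : ContinuousOn v (Set.Ici 0) := by
    have : v = fun t => Cv *ᵥ x t + Dvw *ᵥ w t + Dvd *ᵥ d t := funext hv
    rw [this]
    exact ((contOn_mulVec Cv hxc).add (contOn_mulVec Dvw hw)).add (contOn_mulVec Dvd hd)
  have hec : ContinuousOn e (Set.Ici 0) := by
    have : e = fun t => Ce *ᵥ x t + Dew *ᵥ w t + Ded *ᵥ d t := funext he
    rw [this]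
    exact ((contOn_mulVec Ce hxc).add (contOn_mulVec Dew hw)).add (contOn_mulVec Ded hd)
  have hV'c : ContinuousOn V' (Set.Ici 0) :=
    (contOn_dot hx'c (contOn_mulVec P hxc)).add (contOn_dot hxc (contOn_mulVec P hx'c))
  have hqc : ContinuousOn q (Set.Ici 0) :=
    contOn_dot (contOn_elim hvc hw) (contOn_mulVec M (contOn_elim hvc hw))
  have hsub : Set.uIcc (0:ℝ) T ⊆ Set.Ici 0 := by
    rw [Set.uIcc_of_le hT]; exact Set.Icc_subset_Ici_self
  -- interval integrability
  have int1 : IntervalIntegrable V' MeasureTheory.volume 0 T :=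
    (hV'c.mono hsub).intervalIntegrable
  have int2 : IntervalIntegrable q MeasureTheory.volume 0 T :=
    (hqc.mono hsub).intervalIntegrable
  have int3 : IntervalIntegrable (fun t => e t ⬝ᵥ e t) MeasureTheory.volume 0 T :=
    ((contOn_dot hec hec).mono hsub).intervalIntegrable
  have int4 : IntervalIntegrable (fun t => d t ⬝ᵥ d t) MeasureTheory.volume 0 T :=
    ((contOn_dot hd hd).mono hsub).intervalIntegrable
  -- derivative of the storage function
  have hVd : ∀ t ∈ Set.Ici (0:ℝ), HasDerivWithinAt V (V' t) (Set.Ici 0) t := by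
    intro t ht
    have h1 : ∀ i, HasDerivWithinAt (fun s => x s i) (x' t i) (Set.Ici 0) t :=
      fun i => hasDerivWithinAt_pi.mp (hx t ht) i
    have h2 : HasDerivWithinAt (fun s => ∑ i, ∑ j, x s i * (P i j * x s j))
        (∑ i, ∑ j, (x' t i * (P i j * x t j) + x t i * (P i j * x' t j)))
        (Set.Ici 0) t := by
      refine HasDerivWithinAt.fun_sum fun i _ => HasDerivWithinAt.fun_sum fun j _ => ?_
      exact (h1 i).mul ((h1 j).const_mul (P i j))
    have hVeq : V = fun s => ∑ i, ∑ j, x s i * (P i j * x s j) := by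
      funext s
      simp [hVdef, dotProduct, mulVec, Finset.mul_sum]
    have hV'eq : V' t = ∑ i, ∑ j, (x' t i * (P i j * x t j) + x t i * (P i j * x' t j)) := by
      simp only [hV'def, dotProduct, mulVec, Finset.mul_sum, ← Finset.sum_add_distrib]
    rw [hVeq, hV'eq]
    exact h2
  -- fundamental theorem of calculus
  have key : ∫ t in (0:ℝ)..T, V' t = V T - V 0 := by
    apply intervalIntegral.integral_eq_sub_of_hasDeriv_right_of_le hT
    · exact (contOn_dot hxc (contOn_mulVec P hxc)).mono Set.Icc_subset_Ici_self
    · intro t ht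
      exact ((hVd t (le_of_lt ht.1)).hasDerivAt (Ici_mem_nhds ht.1)).hasDerivWithinAt
    · exact int1
  -- integrated inequality
  have hneg : (∫ t in (0:ℝ)..T,
      (V' t + lam * q t + e t ⬝ᵥ e t - γ ^ 2 * (d t ⬝ᵥ d t))) ≤ 0 := by
    have h0 : (0:ℝ) ≤ ∫ t in (0:ℝ)..T,
        -(V' t + lam * q t + e t ⬝ᵥ e t - γ ^ 2 * (d t ⬝ᵥ d t)) :=
      intervalIntegral.integral_nonneg hT (fun u _ => by have := hpt u; linarith)
    rw [intervalIntegral.integral_neg] at h0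
    linarith
  have hsplit : (∫ t in (0:ℝ)..T,
      (V' t + lam * q t + e t ⬝ᵥ e t - γ ^ 2 * (d t ⬝ᵥ d t)))
      = (∫ t in (0:ℝ)..T, V' t) + lam * (∫ t in (0:ℝ)..T, q t)
        + (∫ t in (0:ℝ)..T, e t ⬝ᵥ e t) - γ ^ 2 * ∫ t in (0:ℝ)..T, d t ⬝ᵥ d t := by
    rw [intervalIntegral.integral_sub ((int1.add (int2.const_mul lam)).add int3)
        (int4.const_mul (γ ^ 2)),
      intervalIntegral.integral_add (int1.add (int2.const_mul lam)) int3,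
      intervalIntegral.integral_add int1 (int2.const_mul lam),
      intervalIntegral.integral_const_mul, intervalIntegral.integral_const_mul]
  have hVT : 0 ≤ V T := by simpa using hP.dotProduct_mulVec_nonneg (x T)
  have hV0 : V 0 = 0 := by simp [hVdef, hx0]
  have hq0 : 0 ≤ ∫ t in (0:ℝ)..T, q t := hIQC T hT
  have hlamq : 0 ≤ lam * ∫ t in (0:ℝ)..T, q t := mul_nonneg hlam hq0
  rw [hsplit, key, hV0] at hneg
  linarith
end

section
/- Suppose the matrices A, B_w, B_d, C_v, D_vw, D_vd, C_e, D_ew, D_ed, a symmetric positive semidefinite P, a scalar λ ≥ 0, and a symmetric M satisfy the dissipativity LMI condition with the passivity supply-rate matrix X = [[0, ½I], [½I, 0]] (so that [d; e]ᵀ X [d; e] = dᵀe). Then for every admissible trajectory (x, w, d, v, e) of the linear system whose uncertainty signals satisfy the static integral quadratic constraint defined by M, and every T ≥ 0, one has ∫₀ᵀ d(t)ᵀ e(t) dt ≥ x(T)ᵀ P x(T) − x(0)ᵀ P x(0) ≥ − x(0)ᵀ P x(0). -/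
open Matrix

section S4Aux

private lemma s4_mulVec_dot {m n : Type*} [Fintype m] [Fintype n] (A : Matrix m n ℝ)
    (u : n → ℝ) (y : m → ℝ) : (A *ᵥ u) ⬝ᵥ y = u ⬝ᵥ (Aᵀ *ᵥ y) := by
  rw [dotProduct_comm, dotProduct_mulVec, ← mulVec_transpose, dotProduct_comm]

private lemma s4_dot_conj {p q : Type*} [Fintype p] [Fintype q] (H : Matrix p q ℝ)
    (Q : Matrix p p ℝ) (z : q → ℝ) :
    z ⬝ᵥ (Hᵀ * Q * H) *ᵥ z = (H *ᵥ z) ⬝ᵥ Q *ᵥ (H *ᵥ z) := by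
  rw [← mulVec_mulVec, ← mulVec_mulVec, dotProduct_mulVec, vecMul_transpose]

private lemma s4_contOn_mulVec {ι κ : Type*} [Fintype ι] [Fintype κ]
    (A : Matrix ι κ ℝ) {f : ℝ → κ → ℝ} {s : Set ℝ} (hf : ContinuousOn f s) :
    ContinuousOn (fun t => A *ᵥ f t) s := by
  have h : Continuous (A.mulVecLin) := LinearMap.continuous_of_finiteDimensional _
  exact h.comp_continuousOn hf

private lemma s4_contOn_dot {ι : Type*} [Fintype ι] {f g : ℝ → ι → ℝ} {s : Set ℝ}
    (hf : ContinuousOn f s) (hg : ContinuousOn g s) :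
    ContinuousOn (fun t => f t ⬝ᵥ g t) s := by
  simp only [dotProduct]
  exact continuousOn_finset_sum _ fun i _ =>
    ((continuous_apply i).comp_continuousOn hf).mul ((continuous_apply i).comp_continuousOn hg)

private lemma s4_F0_quad {n nw nd : ℕ} (A : Matrix (Fin n) (Fin n) ℝ)
    (Bw : Matrix (Fin n) (Fin nw) ℝ) (Bd : Matrix (Fin n) (Fin nd) ℝ)
    (P : Matrix (Fin n) (Fin n) ℝ) (x : Fin n → ℝ) (w : Fin nw → ℝ) (d : Fin nd → ℝ) :
    Sum.elim x (Sum.elim w d) ⬝ᵥ (fromBlocks (Aᵀ * P + P * A) (fromCols (P * Bw) (P * Bd))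
      (fromRows (Bwᵀ * P) (Bdᵀ * P)) 0) *ᵥ Sum.elim x (Sum.elim w d)
      = (A *ᵥ x + Bw *ᵥ w + Bd *ᵥ d) ⬝ᵥ P *ᵥ x + x ⬝ᵥ P *ᵥ (A *ᵥ x + Bw *ᵥ w + Bd *ᵥ d) := by
  simp only [fromBlocks_mulVec, Sum.elim_comp_inl, Sum.elim_comp_inr,
    fromCols_mulVec_sumElim, fromRows_mulVec, sumElim_dotProduct_sumElim,
    add_mulVec, mulVec_add, dotProduct_add, add_dotProduct, s4_mulVec_dot,
    mulVec_mulVec, zero_mulVec, add_zero, dotProduct_zero, zero_dotProduct]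
  ring

end S4Aux

/-- the dissipativity LMI with the passivity supply-rate matrix
`X = [[0, ½I], [½I, 0]]` implies
`∫₀ᵀ d(t)ᵀ e(t) dt ≥ x(T)ᵀPx(T) − x(0)ᵀPx(0) ≥ −x(0)ᵀPx(0)`. -/
theorem statement4 {n nw nd nv : ℕ}
    (A : Matrix (Fin n) (Fin n) ℝ) (Bw : Matrix (Fin n) (Fin nw) ℝ)
    (Bd : Matrix (Fin n) (Fin nd) ℝ)
    (Cv : Matrix (Fin nv) (Fin n) ℝ) (Dvw : Matrix (Fin nv) (Fin nw) ℝ)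
    (Dvd : Matrix (Fin nv) (Fin nd) ℝ)
    (Ce : Matrix (Fin nd) (Fin n) ℝ) (Dew : Matrix (Fin nd) (Fin nw) ℝ)
    (Ded : Matrix (Fin nd) (Fin nd) ℝ)
    (P : Matrix (Fin n) (Fin n) ℝ) (lam : ℝ)
    (M : Matrix (Fin nv ⊕ Fin nw) (Fin nv ⊕ Fin nw) ℝ)
    (hP : P.PosSemidef) (hlam : 0 ≤ lam) (hM : M.IsSymm)
    (hLMI : DissLMI A Bw Bd Cv Dvw Dvd Ce Dew Ded P lam M
      (fromBlocks 0 (((1:ℝ)/2) • (1 : Matrix (Fin nd) (Fin nd) ℝ))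
        (((1:ℝ)/2) • (1 : Matrix (Fin nd) (Fin nd) ℝ)) 0))
    (x : ℝ → Fin n → ℝ) (w : ℝ → Fin nw → ℝ) (d : ℝ → Fin nd → ℝ)
    (v : ℝ → Fin nv → ℝ) (e : ℝ → Fin nd → ℝ)
    (hw : ContinuousOn w (Set.Ici 0)) (hd : ContinuousOn d (Set.Ici 0))
    (hx : ∀ t ∈ Set.Ici (0:ℝ),
      HasDerivWithinAt x (A *ᵥ x t + Bw *ᵥ w t + Bd *ᵥ d t) (Set.Ici 0) t)
    (hv : ∀ t, v t = Cv *ᵥ x t + Dvw *ᵥ w t + Dvd *ᵥ d t)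
    (he : ∀ t, e t = Ce *ᵥ x t + Dew *ᵥ w t + Ded *ᵥ d t)
    (hIQC : ∀ T, 0 ≤ T → 0 ≤ ∫ t in (0:ℝ)..T,
      Sum.elim (v t) (w t) ⬝ᵥ M *ᵥ Sum.elim (v t) (w t)) :
    ∀ T, 0 ≤ T →
      (x T ⬝ᵥ P *ᵥ x T - x 0 ⬝ᵥ P *ᵥ x 0 ≤ ∫ t in (0:ℝ)..T, d t ⬝ᵥ e t) ∧
      (-(x 0 ⬝ᵥ P *ᵥ x 0) ≤ x T ⬝ᵥ P *ᵥ x T - x 0 ⬝ᵥ P *ᵥ x 0) := by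
  classical
  intro T hT
  set x' : ℝ → Fin n → ℝ := fun t => A *ᵥ x t + Bw *ᵥ w t + Bd *ᵥ d t with hx'def
  set q : ℝ → ℝ := fun t => Sum.elim (v t) (w t) ⬝ᵥ M *ᵥ Sum.elim (v t) (w t) with hqdef
  set V : ℝ → ℝ := fun t => x t ⬝ᵥ P *ᵥ x t with hVdef
  set V' : ℝ → ℝ := fun t => x' t ⬝ᵥ P *ᵥ x t + x t ⬝ᵥ P *ᵥ x' t with hV'def
  -- continuity facts
  have hxc : ContinuousOn x (Set.Ici 0) := fun t ht => (hx t ht).continuousWithinAt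
  have hx'c : ContinuousOn x' (Set.Ici 0) := by
    rw [hx'def]
    exact ((s4_contOn_mulVec A hxc).add (s4_contOn_mulVec Bw hw)).add (s4_contOn_mulVec Bd hd)
  have hvc : ContinuousOn v (Set.Ici 0) := by
    have : ContinuousOn (fun t => Cv *ᵥ x t + Dvw *ᵥ w t + Dvd *ᵥ d t) (Set.Ici 0) :=
      ((s4_contOn_mulVec Cv hxc).add (s4_contOn_mulVec Dvw hw)).add (s4_contOn_mulVec Dvd hd)
    exact this.congr fun t _ => hv t
  have hec : ContinuousOn e (Set.Ici 0) := by
    have : ContinuousOn (fun t => Ce *ᵥ x t + Dew *ᵥ w t + Ded *ᵥ d t) (Set.Ici 0) :=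
      ((s4_contOn_mulVec Ce hxc).add (s4_contOn_mulVec Dew hw)).add (s4_contOn_mulVec Ded hd)
    exact this.congr fun t _ => he t
  have hvwc : ContinuousOn (fun t => Sum.elim (v t) (w t)) (Set.Ici (0:ℝ)) := by
    rw [continuousOn_pi]
    rintro (i | i)
    · exact (continuous_apply i).comp_continuousOn hvc
    · exact (continuous_apply i).comp_continuousOn hw
  have hqc : ContinuousOn q (Set.Ici 0) := by
    rw [hqdef]
    exact s4_contOn_dot hvwc (s4_contOn_mulVec M hvwc)
  have hdec : ContinuousOn (fun t => d t ⬝ᵥ e t) (Set.Ici 0) := s4_contOn_dot hd hec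
  have hV'c : ContinuousOn V' (Set.Ici 0) := by
    rw [hV'def]
    exact (s4_contOn_dot hx'c (s4_contOn_mulVec P hxc)).add
      (s4_contOn_dot hxc (s4_contOn_mulVec P hx'c))
  -- derivative of the storage function
  have hVd : ∀ t ∈ Set.Ici (0:ℝ), HasDerivWithinAt V (V' t) (Set.Ici 0) t := by
    intro t ht
    have hxi : ∀ i, HasDerivWithinAt (fun s => x s i) (x' t i) (Set.Ici 0) t := by
      intro i
      exact hasDerivWithinAt_pi.mp (hx t ht) i
    have h1 : HasDerivWithinAt (fun s => ∑ i, ∑ j, x s i * (P i j * x s j))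
        (∑ i, ∑ j, (x' t i * (P i j * x t j) + x t i * (P i j * x' t j))) (Set.Ici 0) t := by
      refine HasDerivWithinAt.fun_sum fun i _ => HasDerivWithinAt.fun_sum fun j _ => ?_
      exact (hxi i).mul ((hxi j).const_mul (P i j))
    have e1 : V = fun s => ∑ i, ∑ j, x s i * (P i j * x s j) := by
      funext s
      simp [hVdef, dotProduct, mulVec, Finset.mul_sum]
    have e2 : V' t = ∑ i, ∑ j, (x' t i * (P i j * x t j) + x t i * (P i j * x' t j)) := by
      simp [hV'def, dotProduct, mulVec, Finset.mul_sum, Finset.sum_add_distrib]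
    rw [e1, e2]
    exact h1
  -- pointwise dissipation inequality
  have key : ∀ t, V' t ≤ d t ⬝ᵥ e t - lam * q t := by
    intro t
    have h := hLMI (Sum.elim (x t) (Sum.elim (w t) (d t)))
    have hH : (fromBlocks Cv (fromCols Dvw Dvd) 0 (fromCols 1 0)) *ᵥ
        Sum.elim (x t) (Sum.elim (w t) (d t)) = Sum.elim (v t) (w t) := by
      rw [hv]
      simp [fromBlocks_mulVec, Sum.elim_comp_inl, Sum.elim_comp_inr, add_assoc]
    have hG : (fromBlocks 0 (fromCols 0 1) Ce (fromCols Dew Ded)) *ᵥ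
        Sum.elim (x t) (Sum.elim (w t) (d t)) = Sum.elim (d t) (e t) := by
      rw [he]
      simp [fromBlocks_mulVec, Sum.elim_comp_inl, Sum.elim_comp_inr, add_assoc]
    have hX : Sum.elim (d t) (e t) ⬝ᵥ (fromBlocks 0 (((1:ℝ)/2) • (1 : Matrix (Fin nd) (Fin nd) ℝ))
        (((1:ℝ)/2) • (1 : Matrix (Fin nd) (Fin nd) ℝ)) 0) *ᵥ Sum.elim (d t) (e t)
        = d t ⬝ᵥ e t := by
      simp [fromBlocks_mulVec, Sum.elim_comp_inl, Sum.elim_comp_inr, smul_mulVec,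
        sumElim_dotProduct_sumElim, dotProduct_smul, dotProduct_comm (e t) (d t)]
      ring
    simp only [Matrix.sub_mulVec, Matrix.add_mulVec, Matrix.smul_mulVec,
      dotProduct_add, dotProduct_sub, dotProduct_smul, smul_eq_mul] at h
    rw [s4_dot_conj, s4_dot_conj, hH, hG, hX, s4_F0_quad] at h
    rw [hV'def, hqdef]
    simp only [hx'def]
    linarith
  -- integration
  have hIcc : Set.Icc (0:ℝ) T ⊆ Set.Ici 0 := fun s hs => hs.1
  have hsub : Set.uIcc (0:ℝ) T ⊆ Set.Ici 0 := by
    rw [Set.uIcc_of_le hT]; exact hIcc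
  have hV'int : IntervalIntegrable V' MeasureTheory.volume 0 T :=
    (hV'c.mono hsub).intervalIntegrable
  have hqint : IntervalIntegrable q MeasureTheory.volume 0 T :=
    (hqc.mono hsub).intervalIntegrable
  have hdeint : IntervalIntegrable (fun t => d t ⬝ᵥ e t) MeasureTheory.volume 0 T :=
    (hdec.mono hsub).intervalIntegrable
  have hgint : IntervalIntegrable (fun t => d t ⬝ᵥ e t - lam * q t) MeasureTheory.volume 0 T :=
    hdeint.sub (hqint.const_mul lam)
  have hVcont : ContinuousOn V (Set.Icc 0 T) := by
    have : ContinuousOn V (Set.Ici 0) := by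
      rw [hVdef]
      exact s4_contOn_dot hxc (s4_contOn_mulVec P hxc)
    exact this.mono hIcc
  have hderiv : ∀ s ∈ Set.Ioo (0:ℝ) T, HasDerivWithinAt V (V' s) (Set.Ioi s) s := fun s hs =>
    (hVd s (le_of_lt hs.1)).mono fun u hu => le_of_lt (hs.1.trans hu)
  have hFTC : ∫ s in (0:ℝ)..T, V' s = V T - V 0 :=
    intervalIntegral.integral_eq_sub_of_hasDeriv_right_of_le hT hVcont hderiv hV'int
  have hmono : ∫ s in (0:ℝ)..T, V' s ≤ ∫ s in (0:ℝ)..T, (d s ⬝ᵥ e s - lam * q s) :=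
    intervalIntegral.integral_mono_on hT hV'int hgint fun s _ => key s
  have hsplit : ∫ s in (0:ℝ)..T, (d s ⬝ᵥ e s - lam * q s)
      = (∫ s in (0:ℝ)..T, d s ⬝ᵥ e s) - lam * ∫ s in (0:ℝ)..T, q s := by
    rw [intervalIntegral.integral_sub hdeint (hqint.const_mul lam),
      intervalIntegral.integral_const_mul]
  have hqnn : 0 ≤ lam * ∫ s in (0:ℝ)..T, q s := by
    refine mul_nonneg hlam ?_
    have := hIQC T hT
    simpa [hqdef] using this
  have h2 : 0 ≤ V T := by
    have := hP.dotProduct_mulVec_nonneg (x T)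
    rw [hVdef]
    simpa using this
  constructor
  · linarith
  · linarith
end
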